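/- Let r ≥ 0, ‖ς‖₂ ≥ 0 be reals. Then for every t ∈ [0,1], (1 - t²)r² + t⁴r²/(t² + √(π/2)·r) - t·r·‖ς‖₂ ≥ (√(2/π) - ‖ς‖₂)·r - 2/π. -/
import Mathlib


theorem coercivity_real_inequality (r c t : ℝ) (hr : 0 ≤ r) (hc : 0 ≤ c)
    (ht : t ∈ Set.Icc (0 : ℝ) 1) :
    (1 - t ^ 2) * r ^ 2 + t ^ 4 * r ^ 2 / (t ^ 2 + Real.sqrt (Real.pi / 2) * r)
      - t * r * c
    ≥ (Real.sqrt (2 / Real.pi) - c) * r - 2 / Real.pi := by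
  obtain ⟨ht0, ht1⟩ := ht
  have hpi : (0:ℝ) < Real.pi := Real.pi_pos
  set a := Real.sqrt (Real.pi / 2) with ha
  set b := Real.sqrt (2 / Real.pi) with hb
  have ha0 : 0 < a := Real.sqrt_pos.mpr (by positivity)
  have hb0 : 0 ≤ b := Real.sqrt_nonneg _
  have hb2 : b ^ 2 = 2 / Real.pi := Real.sq_sqrt (by positivity)
  have hab : a * b = 1 := by
    rw [ha, hb, ← Real.sqrt_mul (by positivity)]
    rw [show Real.pi / 2 * (2 / Real.pi) = 1 by field_simp]
    exact Real.sqrt_one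
  rcases eq_or_lt_of_le hr with hr0 | hr0
  · rw [← hr0]
    simp only [mul_zero, zero_pow, ne_eq, OfNat.ofNat_ne_zero, not_false_eq_true, mul_zero,
      zero_div, add_zero]
    have : (0:ℝ) ≤ 2 / Real.pi := by positivity
    simp [zero_div]
    linarith
  · have hD : 0 < t ^ 2 + a * r := by positivity
    have key : t ^ 4 * r ^ 2 / (t ^ 2 + a * r) ≥ b * t ^ 4 * r - 2 / Real.pi * t ^ 6 := by
      rw [ge_iff_le, le_div_iff₀ hD]
      have : (b * t ^ 4 * r - 2 / Real.pi * t ^ 6) * (t ^ 2 + a * r)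
          = t ^ 4 * r ^ 2 - b ^ 2 * t ^ 8 := by
        rw [← hb2]; linear_combination (t ^ 4 * r ^ 2 - b * t ^ 6 * r) * hab
      rw [this]
      nlinarith [sq_nonneg (b * t ^ 4)]
    have quad : (1 - t ^ 2) * (r ^ 2 - b * (1 + t ^ 2) * r
        + 2 / Real.pi * (1 + t ^ 2 + t ^ 4)) ≥ 0 := by
      have h1 : (0:ℝ) ≤ 1 - t ^ 2 := by nlinarith
      have h2 : r ^ 2 - b * (1 + t ^ 2) * r + 2 / Real.pi * (1 + t ^ 2 + t ^ 4) ≥ 0 := by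
        nlinarith [sq_nonneg (2 * r - b * (1 + t ^ 2)), sq_nonneg t, sq_nonneg (t^2),
          div_pos (by norm_num : (0:ℝ) < 2) hpi]
      positivity
    have htc : (1 - t) * r * c ≥ 0 := by
      have : 0 ≤ 1 - t := by linarith
      positivity
    nlinarith [key, quad, htc]
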